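/- arXiv:2002.00383 — 8 statements merged into one kernel-verified Lean document; each statement's English description precedes it below -/
import Mathlib

section
/- In a symmetric monoidal category C with unit object 1, if e : I ⟶ 1 is a monomorphism, then e is an idal, i.e. (e ⊗ id_I) = (id_I ⊗ e) as morphisms I ⊗ I ⟶ I (after composing with the left/right unitors). -/
open CategoryTheory MonoidalCategory

/-- In a symmetric monoidal category, a monomorphism `e : I ⟶ 𝟙` is an idal:
`λ_I ∘ (e ⊗ id_I) = ρ_I ∘ (id_I ⊗ e)`. -/
theorem mono_is_idal {C : Type*} [Category C] [MonoidalCategory C] [SymmetricCategory C]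
    {I : C} (e : I ⟶ 𝟙_ C) [Mono e] :
    (e ▷ I) ≫ (λ_ I).hom = (I ◁ e) ≫ (ρ_ I).hom := by
  rw [← cancel_mono e, Category.assoc, Category.assoc, ← leftUnitor_naturality,
    ← rightUnitor_naturality, ← Category.assoc, ← Category.assoc, whisker_exchange,
    unitors_equal]
end

section
/- If e : I ⟶ 1 and f : J ⟶ 1 are idals in a symmetric monoidal category C, then the composite I ⊗ J ⟶ 1 ⊗ 1 ≅ 1 (given by (e ⊗ f) followed by the unitor) is again an idal. -/
open CategoryTheory MonoidalCategory

/-- The idal product of two idals is an idal: if `e : I ⟶ 𝟙` and `f : J ⟶ 𝟙` are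
idals, then `(e ⊗ₘ f) ≫ λ_𝟙 : I ⊗ J ⟶ 𝟙` is an idal. -/
theorem idal_product_is_idal {C : Type*} [Category C] [MonoidalCategory C] [SymmetricCategory C]
    {I J : C} (e : I ⟶ 𝟙_ C) (f : J ⟶ 𝟙_ C)
    (he : (e ▷ I) ≫ (λ_ I).hom = (I ◁ e) ≫ (ρ_ I).hom)
    (hf : (f ▷ J) ≫ (λ_ J).hom = (J ◁ f) ≫ (ρ_ J).hom) :
    (((e ⊗ₘ f) ≫ (λ_ (𝟙_ C)).hom) ▷ (I ⊗ J)) ≫ (λ_ (I ⊗ J)).hom =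
      ((I ⊗ J) ◁ ((e ⊗ₘ f) ≫ (λ_ (𝟙_ C)).hom)) ≫ (ρ_ (I ⊗ J)).hom := by
  calc (((e ⊗ₘ f) ≫ (λ_ (𝟙_ C)).hom) ▷ (I ⊗ J)) ≫ (λ_ (I ⊗ J)).hom
      = (e ⊗ₘ f) ▷ (I ⊗ J) ≫ tensorμ (𝟙_ C) (𝟙_ C) I J ≫ ((λ_ I).hom ⊗ₘ (λ_ J).hom) := by
        rw [tensor_left_unitality]
        simp
        monoidal
    _ = tensorμ I J I J ≫ ((e ▷ I) ≫ (λ_ I).hom ⊗ₘ (f ▷ J) ≫ (λ_ J).hom) := by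
        rw [← Category.assoc, tensorμ_natural_left]
        simp [← tensorHom_comp_tensorHom]
    _ = tensorμ I J I J ≫ ((I ◁ e) ≫ (ρ_ I).hom ⊗ₘ (J ◁ f) ≫ (ρ_ J).hom) := by
        rw [he, hf]
    _ = (I ⊗ J) ◁ (e ⊗ₘ f) ≫ tensorμ I J (𝟙_ C) (𝟙_ C) ≫ ((ρ_ I).hom ⊗ₘ (ρ_ J).hom) := by
        rw [← Category.assoc, tensorμ_natural_right]
        simp [← tensorHom_comp_tensorHom]
    _ = ((I ⊗ J) ◁ ((e ⊗ₘ f) ≫ (λ_ (𝟙_ C)).hom)) ≫ (ρ_ (I ⊗ J)).hom := by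
        rw [tensor_right_unitality]
        simp
end

section
/- Over a Dedekind domain R, every idal e : I ⟶ R with I a finitely generated R-module is isomorphic (in the category of idals) to one of the form J ⊕ M ⟶ R, (j, m) ↦ j, where J ⊆ R is an ideal and M is an R-module with J·M = 0. Specifically: since the ideal e(I) ⊆ R is projective, the kernel of e splits off, I ≅ e(I) ⊕ ker(e), and the idal property forces e(I)·ker(e) = 0. -/
open scoped nonZeroDivisors in
/-- A surjection from any module onto an ideal of a Dedekind domain splits. -/
lemma idal_exists_section {R : Type*} [CommRing R] [IsDedekindDomain R]
    {I : Type*} [AddCommGroup I] [Module R I] (e : I →ₗ[R] R) :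
    ∃ s : (LinearMap.range e) →ₗ[R] I, ∀ j : LinearMap.range e, e (s j) = (j : R) := by
  set J : Ideal R := LinearMap.range e with hJ
  by_cases hbot : J = ⊥
  · refine ⟨0, fun j => ?_⟩
    have hz : (j : R) = 0 := (Submodule.mem_bot R).mp (hbot ▸ j.2)
    simp [hz]
  · -- invertibility of J as a fractional ideal
    set K := FractionRing R
    have hinj : Function.Injective (algebraMap R K) := IsFractionRing.injective R K
    have hne : (J : FractionalIdeal R⁰ K) ≠ 0 := FractionalIdeal.coeIdeal_ne_zero.mpr hbot
    have hmul : (J : FractionalIdeal R⁰ K) * (J : FractionalIdeal R⁰ K)⁻¹ = 1 :=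
      mul_inv_cancel₀ hne
    have hone : (1 : K) ∈ ((J : FractionalIdeal R⁰ K) * (J : FractionalIdeal R⁰ K)⁻¹ :
        Submodule R K) := by
      rw [← FractionalIdeal.coe_mul, hmul]
      exact FractionalIdeal.one_mem_one _
    have key : ∀ z ∈ ((J : FractionalIdeal R⁰ K) * (J : FractionalIdeal R⁰ K)⁻¹ :
        Submodule R K),
        ∃ s : J →ₗ[R] I, ∀ j : J, algebraMap R K (e (s j)) = z * algebraMap R K (j : R) := by
      intro z hz
      refine Submodule.mul_induction_on hz ?_ ?_
      · intro a ha b hb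
        obtain ⟨j₀, hj₀J, rfl⟩ := (FractionalIdeal.mem_coeIdeal _).mp ha
        obtain ⟨x₀, hx₀⟩ := hj₀J
        have hr : ∀ j : J, ∃ r : R, algebraMap R K r = b * algebraMap R K (j : R) := by
          intro j
          have : b * algebraMap R K (j : R) ∈ (1 : FractionalIdeal R⁰ K) := by
            have hb' := FractionalIdeal.mem_coe.mp hb
            rw [FractionalIdeal.mem_inv_iff hne] at hb'
            exact hb' _ ((FractionalIdeal.mem_coeIdeal _).mpr ⟨(j : R), j.2, rfl⟩)
          obtain ⟨r, hr⟩ := (FractionalIdeal.mem_one_iff _).mp this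
          exact ⟨r, hr⟩
        choose r hrr using hr
        have hadd : ∀ x y : J, r (x + y) = r x + r y := fun x y => hinj <| by
          rw [hrr, map_add, hrr, hrr, Submodule.coe_add, map_add, mul_add]
        have hsmul : ∀ (c : R) (x : J), r (c • x) = c • r x := fun c x => hinj <| by
          rw [hrr, Algebra.smul_def, map_mul, hrr, SetLike.val_smul, Algebra.smul_def,
            map_mul]
          ring
        refine ⟨(⟨⟨r, hadd⟩, fun c x => hsmul c x⟩ : J →ₗ[R] R).smulRight x₀, fun j => ?_⟩
        simp only [LinearMap.smulRight_apply, LinearMap.coe_mk, AddHom.coe_mk, map_smul,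
          hx₀, smul_eq_mul, map_mul, hrr]
        ring
      · rintro x y ⟨s1, h1⟩ ⟨s2, h2⟩
        refine ⟨s1 + s2, fun j => ?_⟩
        simp only [LinearMap.add_apply, map_add, h1, h2, add_mul]
    obtain ⟨s, hs⟩ := key 1 hone
    exact ⟨s, fun j => hinj (by rw [hs, one_mul])⟩


/-- Over a Dedekind domain, every idal `e : I ⟶ R` with `I` finitely generated is
isomorphic, in the category of idals, to one of the form `J ⊕ M ⟶ R`, `(j,m) ↦ j`,
with `J = e(I)` an ideal and `M = ker e` a module annihilated by `J`.  Concretely: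
there is a linear isomorphism `φ : I ≃ (range e) × (ker e)` under which `e` becomes
the first projection (followed by the inclusion of the image ideal), and the image
ideal annihilates the kernel. -/
theorem idal_dedekind_classification {R : Type*} [CommRing R] [IsDedekindDomain R]
    {I : Type*} [AddCommGroup I] [Module R I] [Module.Finite R I]
    (e : I →ₗ[R] R) (hidal : ∀ x y : I, e x • y = e y • x) :
    ∃ φ : I ≃ₗ[R] (LinearMap.range e × LinearMap.ker e),
      (∀ x : I, e x = ((φ x).1 : R)) ∧
        (∀ r : R, r ∈ LinearMap.range e → ∀ k : I, k ∈ LinearMap.ker e →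
          r • k = (0 : I)) := by
  obtain ⟨s, hs⟩ := idal_exists_section e
  have hcoe : ∀ x : I, ((e.rangeRestrict x : LinearMap.range e) : R) = e x := fun x => rfl
  have hker : ∀ x : I, x - s (e.rangeRestrict x) ∈ LinearMap.ker e := fun x => by
    rw [LinearMap.mem_ker, map_sub, hs, hcoe, sub_self]
  let f : I →ₗ[R] (LinearMap.range e × LinearMap.ker e) :=
    LinearMap.prod e.rangeRestrict
      ((LinearMap.id - s ∘ₗ e.rangeRestrict).codRestrict (LinearMap.ker e) hker)
  let g : (LinearMap.range e × LinearMap.ker e) →ₗ[R] I :=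
    s ∘ₗ LinearMap.fst R _ _ + (LinearMap.ker e).subtype ∘ₗ LinearMap.snd R _ _
  have hg : ∀ p : LinearMap.range e × LinearMap.ker e, g p = s p.1 + (p.2 : I) := fun p => rfl
  have hrr : ∀ (j : LinearMap.range e) (k : LinearMap.ker e),
      e.rangeRestrict (s j + (k : I)) = j := by
    intro j k
    apply Subtype.ext
    rw [hcoe, map_add, hs, LinearMap.mem_ker.mp k.2, add_zero]
  refine ⟨LinearEquiv.ofLinear f g ?_ ?_, fun x => rfl, ?_⟩
  · apply LinearMap.ext
    rintro ⟨j, k⟩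
    apply Prod.ext
    · show e.rangeRestrict (g (j, k)) = j
      rw [hg]; exact hrr j k
    · apply Subtype.ext
      show s j + (k : I) - s (e.rangeRestrict (s j + (k : I))) = (k : I)
      rw [hrr j k]
      abel
  · apply LinearMap.ext
    intro x
    show s (e.rangeRestrict x) + (x - s (e.rangeRestrict x)) = x
    abel
  · rintro r ⟨x, rfl⟩ k hk
    rw [hidal x k, LinearMap.mem_ker.mp hk, zero_smul]
end

section
/- Let R be a commutative ring and let e : I ⟶ R, f : J ⟶ R be two idals of R-modules such that the map (e, f) : I ⊕ J ⟶ R is surjective. Then the commutative square with vertices I ⊗_R J, I, J, R (maps: e ⊗ id_J : I ⊗ J ⟶ J, id_I ⊗ f : I ⊗ J ⟶ I, and f : J ⟶ R, e : I ⟶ R) is a pushout square of R-modules. -/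
open TensorProduct CategoryTheory

/-- If `e : I ⟶ R` and `f : J ⟶ R` are idals of `R`-modules with `(e,f) : I ⊕ J ⟶ R`
surjective, then the square with vertices `I ⊗[R] J`, `J`, `I`, `R`, whose maps are
`e ⊗ id_J : I ⊗ J ⟶ J` (i.e. `x ⊗ y ↦ e x • y`), `id_I ⊗ f : I ⊗ J ⟶ I`
(i.e. `x ⊗ y ↦ f y • x`), `f : J ⟶ R` and `e : I ⟶ R`, is a pushout square of
`R`-modules. -/
theorem idal_cover_pushout {R : Type u} [CommRing R] {I J : Type u} [AddCommGroup I]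
    [AddCommGroup J] [Module R I] [Module R J] (e : I →ₗ[R] R) (f : J →ₗ[R] R)
    (he : ∀ x y : I, e x • y = e y • x) (hf : ∀ x y : J, f x • y = f y • x)
    (hsurj : Function.Surjective ⇑(LinearMap.coprod e f)) :
    IsPushout
      (ModuleCat.ofHom (TensorProduct.lift ((LinearMap.lsmul R J).comp e)))
      (ModuleCat.ofHom (TensorProduct.lift (((LinearMap.lsmul R I).comp f).flip)))
      (ModuleCat.ofHom f) (ModuleCat.ofHom e) := by
  obtain ⟨⟨a, b⟩, hab⟩ := hsurj 1
  simp only [LinearMap.coprod_apply] at hab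
  have comm : (ModuleCat.ofHom (TensorProduct.lift ((LinearMap.lsmul R J).comp e))) ≫
      (ModuleCat.ofHom f) =
      (ModuleCat.ofHom (TensorProduct.lift (((LinearMap.lsmul R I).comp f).flip))) ≫
      (ModuleCat.ofHom e) := by
    apply ModuleCat.hom_ext
    apply TensorProduct.ext'
    intro x y
    show f (e x • y) = e (f y • x)
    simp [mul_comm]
  refine IsPushout.of_isColimit' ⟨comm⟩ ?_
  have key : ∀ (s : Limits.PushoutCocone
      (ModuleCat.ofHom (TensorProduct.lift ((LinearMap.lsmul R J).comp e)))
      (ModuleCat.ofHom (TensorProduct.lift (((LinearMap.lsmul R I).comp f).flip))))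
      (x : I) (y : J), s.inl (e x • y) = s.inr (f y • x) := by
    intro s x y
    exact LinearMap.congr_fun (congrArg ModuleCat.Hom.hom s.condition) (x ⊗ₜ[R] y)
  refine Limits.PushoutCocone.IsColimit.mk _
    (fun s => ModuleCat.ofHom (LinearMap.toSpanSingleton R _ (s.inr a + s.inl b))) ?_ ?_ ?_
  · intro s
    refine ModuleCat.hom_ext (LinearMap.ext fun y => ?_)
    show f y • (s.inr a + s.inl b) = s.inl y
    rw [smul_add, ← map_smul, ← map_smul, ← key s a y, ← hf b y, ← map_add, ← add_smul,
      hab, one_smul]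
  · intro s
    refine ModuleCat.hom_ext (LinearMap.ext fun x => ?_)
    show e x • (s.inr a + s.inl b) = s.inr x
    rw [smul_add, ← map_smul, ← map_smul, ← he a x, key s x b, ← map_add, ← add_smul,
      hab, one_smul]
  · intro s m h1 h2
    refine ModuleCat.hom_ext (LinearMap.ext fun r₀ => ?_)
    suffices h : ∀ r : R, m r = LinearMap.toSpanSingleton R _ (s.inr a + s.inl b) r from h r₀
    intro r
    have h1' : ∀ y : J, m (f y) = s.inl y := fun y => LinearMap.congr_fun (congrArg ModuleCat.Hom.hom h1) y
    have h2' : ∀ x : I, m (e x) = s.inr x := fun x => LinearMap.congr_fun (congrArg ModuleCat.Hom.hom h2) x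
    have hr : r = e (r • a) + f (r • b) := by
      rw [map_smul, map_smul, smul_eq_mul, smul_eq_mul, ← mul_add, hab, mul_one]
    rw [LinearMap.toSpanSingleton_apply, smul_add, ← map_smul, ← map_smul,
      ← h2' (r • a), ← h1' (r • b), ← map_add]
    exact congrArg m hr
end

section
/- Let R be a commutative ring and let e : I ⟶ R, f : J ⟶ R be idals of R-modules forming an idal cover (i.e. (e,f) : I ⊕ J ⟶ R is surjective). Then for all natural numbers n, m ≥ 0, the tensor power idals e^{⊗n} : I^{⊗n} ⟶ R and f^{⊗m} : J^{⊗m} ⟶ R also form an idal cover. -/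
open TensorProduct PiTensorProduct

/-- The `n`-th tensor power of an idal `e : I ⟶ R`:
`I^{⊗n} ⟶ R`, `x₁ ⊗ ⋯ ⊗ xₙ ↦ e x₁ ⋯ e xₙ`. -/
noncomputable def tpowIdal {R : Type u} [CommRing R] {I : Type u} [AddCommGroup I]
    [Module R I] (e : I →ₗ[R] R) (n : ℕ) : (⨂[R]^n I) →ₗ[R] R :=
  PiTensorProduct.lift ((MultilinearMap.mkPiAlgebra R (Fin n) R).compLinearMap fun _ => e)

theorem tpowIdal_tprod {R : Type u} [CommRing R] {I : Type u} [AddCommGroup I]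
    [Module R I] (e : I →ₗ[R] R) (n : ℕ) (x : I) :
    tpowIdal e n (PiTensorProduct.tprod R (fun _ : Fin n => x)) = (e x) ^ n := by
  simp [tpowIdal]

/-- If the idals `e : I ⟶ R` and `f : J ⟶ R` form an idal cover (`I ⊕ J ⟶ R`
surjective), then for all `n m : ℕ` the tensor power idals
`e^{⊗n} : I^{⊗n} ⟶ R` and `f^{⊗m} : J^{⊗m} ⟶ R` also form an idal cover. -/
theorem idal_cover_tensor_pow {R : Type u} [CommRing R] {I J : Type u} [AddCommGroup I]
    [AddCommGroup J] [Module R I] [Module R J] (e : I →ₗ[R] R) (f : J →ₗ[R] R)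
    (he : ∀ x y : I, e x • y = e y • x) (hf : ∀ x y : J, f x • y = f y • x)
    (hcov : Function.Surjective ⇑(LinearMap.coprod e f)) (n m : ℕ) :
    Function.Surjective ⇑(LinearMap.coprod (tpowIdal e n) (tpowIdal f m)) := by
  obtain ⟨⟨p, q⟩, hpq⟩ := hcov 1
  simp only [LinearMap.coprod_apply] at hpq
  have hco : IsCoprime (e p) (f q) := ⟨1, 1, by rw [one_mul, one_mul, hpq]⟩
  obtain ⟨u, v, huv⟩ := hco.pow (m := n) (n := m)
  intro r
  refine ⟨((r * u) • PiTensorProduct.tprod R (fun _ : Fin n => p),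
          (r * v) • PiTensorProduct.tprod R (fun _ : Fin m => q)), ?_⟩
  simp only [LinearMap.coprod_apply, map_smul, smul_eq_mul, tpowIdal_tprod]
  calc r * u * e p ^ n + r * v * f q ^ m
      = r * (u * e p ^ n + v * f q ^ m) := by ring
    _ = r := by rw [huv, mul_one]
end

section
/- Let C be a symmetric monoidal closed category, e : J ⟶ 1 an idal, and M an object such that the induced map M ≅ [1, M] ⟶ [J, M] (internal hom precomposition with e) is an isomorphism. Then for every n ≥ 1 the induced map M ⟶ [J^{⊗n}, M] is an isomorphism. -/
open CategoryTheory MonoidalCategory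

variable {C : Type*} [Category C] [MonoidalCategory C]

/-- Iterated tensor powers `J^{⊗n}` (with `J^{⊗0} = 𝟙` and `J^{⊗(n+1)} = J^{⊗n} ⊗ J`). -/
def tensorPowObj (J : C) : ℕ → C
  | 0 => 𝟙_ C
  | n + 1 => tensorPowObj J n ⊗ J

/-- Iterated tensor power `e^{⊗n} : J^{⊗n} ⟶ 𝟙` of a morphism `e : J ⟶ 𝟙`. -/
def tensorPowMap {J : C} (e : J ⟶ 𝟙_ C) : ∀ n, tensorPowObj J n ⟶ 𝟙_ C
  | 0 => 𝟙 (𝟙_ C)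
  | n + 1 => (tensorPowMap e n ⊗ₘ e) ≫ (λ_ (𝟙_ C)).hom

open MonoidalClosed in
/-- Conjugation across adjunctions is compatible with the hom-set equivalences. -/
theorem conj_homEquiv' {C' : Type*} {D' : Type*} [Category C'] [Category D']
    {L₁ L₂ : C' ⥤ D'} {R₁ R₂ : D' ⥤ C'}
    (adj₁ : L₁ ⊣ R₁) (adj₂ : L₂ ⊣ R₂) (β : L₂ ⟶ L₁) {Z : C'} {Y : D'} (h : L₁.obj Z ⟶ Y) :
    (adj₁.homEquiv Z Y) h ≫ (conjugateEquiv adj₁ adj₂ β).app Y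
      = (adj₂.homEquiv Z Y) (β.app Z ≫ h) := by
  rw [Adjunction.homEquiv_unit, Adjunction.homEquiv_unit, Category.assoc,
    (conjugateEquiv adj₁ adj₂ β).naturality h, ← Category.assoc,
    unit_conjugateEquiv, Category.assoc, ← R₂.map_comp]

section Aux

open MonoidalClosed

variable [MonoidalClosed C]

theorem curry_whiskerRight_comp {A B X Y : C} (q : B ⟶ A) (g : A ⊗ X ⟶ Y) :
    curry ((q ▷ X) ≫ g) = curry g ≫ (pre q).app Y := by
  apply uncurry_injective
  rw [uncurry_curry, uncurry_natural_left, MonoidalClosed.uncurry_pre, ← Category.assoc,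
    whisker_exchange, Category.assoc, ← uncurry_eq, uncurry_curry]

/-- The canonical iso `[A ⊗ B, -] ≅ [B, [A, -]]`. -/
noncomputable def ihomTensorIso' (A B : C) : ihom (A ⊗ B) ≅ ihom A ⋙ ihom B :=
  conjugateIsoEquiv (ihom.adjunction (A ⊗ B))
    ((ihom.adjunction B).comp (ihom.adjunction A)) (tensorLeftTensor A B).symm

theorem curry_comp_ihomTensorIso' (A B : C) {X Y : C} (h : (A ⊗ B) ⊗ X ⟶ Y) :
    curry h ≫ (ihomTensorIso' A B).hom.app Y
      = curry (curry ((α_ A B X).inv ≫ h)) := by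
  have := conj_homEquiv' (ihom.adjunction (A ⊗ B))
    ((ihom.adjunction B).comp (ihom.adjunction A)) (tensorLeftTensor A B).inv h
  simpa [ihomTensorIso', Adjunction.comp_homEquiv, tensorLeftTensor_inv_app, curry] using this

theorem isIso_pre_of_iso {A B : C} (q : B ≅ A) : IsIso (pre q.hom) :=
  ⟨pre q.inv, by rw [← MonoidalClosed.pre_map, q.inv_hom_id, MonoidalClosed.pre_id],
    by rw [← MonoidalClosed.pre_map, q.hom_inv_id, MonoidalClosed.pre_id]⟩

end Aux

open MonoidalClosed

/-- Let `C` be symmetric monoidal closed, `e : J ⟶ 𝟙` an idal and `M` an object such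
that the canonical map `M ⟶ [J, M]` (the curry of `(e ▷ M) ≫ λ_M`) is an isomorphism.
Then for every `n ≥ 1` the canonical map `M ⟶ [J^{⊗n}, M]` is an isomorphism. -/
theorem idal_hom_iso_tensor_pow [SymmetricCategory C] [MonoidalClosed C]
    {J : C} (e : J ⟶ 𝟙_ C)
    (hidal : (e ▷ J) ≫ (λ_ J).hom = (J ◁ e) ≫ (ρ_ J).hom) (M : C)
    (h1 : IsIso (MonoidalClosed.curry ((e ▷ M) ≫ (λ_ M).hom))) :
    ∀ n : ℕ, 1 ≤ n →
      IsIso (MonoidalClosed.curry ((tensorPowMap e n ▷ M) ≫ (λ_ M).hom)) := by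
  intro n hn
  induction n with
  | zero => omega
  | succ n ih =>
    rcases Nat.eq_zero_or_pos n with h0 | h0
    · -- base case `n + 1 = 1`
      subst h0
      have ht1 : tensorPowMap e 1 = (λ_ J).hom ≫ e := by
        simp [tensorPowMap, tensorPowObj, MonoidalCategory.tensorHom_def]
      change IsIso (curry ((MonoidalCategoryStruct.whiskerRight (X₁ := 𝟙_ C ⊗ J) (tensorPowMap e 1) M) ≫ (λ_ M).hom))
      rw [ht1, comp_whiskerRight, Category.assoc, curry_whiskerRight_comp]
      have : IsIso (pre (λ_ J).hom) := isIso_pre_of_iso (λ_ J)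
      infer_instance
    · have ihn := ih h0
      set A := tensorPowObj J n with hA
      have hkey := curry_comp_ihomTensorIso' A J
        ((MonoidalCategoryStruct.whiskerRight (X₁ := A ⊗ J) (tensorPowMap e (n + 1)) M) ≫ (λ_ M).hom)
      have hstruct : (α_ A J M).inv ≫ (MonoidalCategoryStruct.whiskerRight (X₁ := A ⊗ J) (tensorPowMap e (n + 1)) M) ≫ (λ_ M).hom
          = (A ◁ ((e ▷ M) ≫ (λ_ M).hom)) ≫ (tensorPowMap e n ▷ M) ≫ (λ_ M).hom := by
        rw [show MonoidalCategoryStruct.whiskerRight (X₁ := A ⊗ J) (tensorPowMap e (n + 1)) M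
          = ((tensorPowMap e n ⊗ₘ e) ≫ (λ_ (𝟙_ C)).hom) ▷ M from rfl]
        simp only [MonoidalCategory.tensorHom_def, comp_whiskerRight, Category.assoc]
        rw [whisker_exchange_assoc, leftUnitor_naturality,
          ← associator_inv_naturality_left_assoc,
          ← associator_inv_naturality_middle_assoc,
          ← leftUnitor_tensor_hom_assoc, leftUnitor_naturality_assoc]
      have hkey2 : curry ((MonoidalCategoryStruct.whiskerRight (X₁ := A ⊗ J) (tensorPowMap e (n + 1)) M) ≫ (λ_ M).hom) ≫
            (ihomTensorIso' A J).hom.app M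
          = curry ((e ▷ M) ≫ (λ_ M).hom) ≫
            (ihom J).map (curry ((tensorPowMap e n ▷ M) ≫ (λ_ M).hom)) := by
        rw [hkey, hstruct, curry_natural_left]
        exact curry_natural_right _ _
      have h2 : IsIso (curry ((e ▷ M) ≫ (λ_ M).hom) ≫
          (ihom J).map (curry ((tensorPowMap e n ▷ M) ≫ (λ_ M).hom))) := by
        infer_instance
      rw [← hkey2] at h2
      have : IsIso ((ihomTensorIso' A J).hom.app M) := Iso.isIso_hom ((ihomTensorIso' A J).app M)
      exact IsIso.of_isIso_comp_right
        (curry ((MonoidalCategoryStruct.whiskerRight (X₁ := A ⊗ J) (tensorPowMap e (n + 1)) M) ≫ (λ_ M).hom))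
        ((ihomTensorIso' A J).hom.app M)
end

section
/- Let R be a commutative ring, f ∈ R, and let e : R ⟶ R be the idal given by multiplication by f. Then for every R-module M, the colimit of the sequence Hom_R(R, M) ⟶ Hom_R(R, M) ⟶ ⋯ with transition maps given by precomposition with multiplication by f is naturally isomorphic to the localization M[f⁻¹] = M ⊗_R R[f⁻¹]. In particular, Γ(D(f), M~) ≅ colim_n Hom_R(J^{⊗n}, M) for the idal J = (R, f). -/
open Module

/-- The directed system `M → M → M → ⋯` whose transition map from level `i` to level
`j` is multiplication by `f ^ (j - i)` (so each single step is multiplication by `f`).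
This is the system `Hom(R, M) → Hom(R, M) → ⋯` of the idal `(R, f)`. -/
def mulPowSystem {R : Type u} [CommRing R] {M : Type u} [AddCommGroup M] [Module R M]
    (f : R) : ∀ i j : ℕ, i ≤ j → ((fun _ : ℕ => M) i) →ₗ[R] ((fun _ : ℕ => M) j) :=
  fun i j _ => (f ^ (j - i)) • (LinearMap.id : M →ₗ[R] M)

lemma mulPowSystem_apply {R : Type u} [CommRing R] {M : Type u} [AddCommGroup M] [Module R M]
    (f : R) (i j : ℕ) (h : i ≤ j) (m : M) :
    mulPowSystem (M := M) f i j h m = (f ^ (j - i)) • m := rfl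

instance mulPowSystem_directed {R : Type u} [CommRing R] {M : Type u} [AddCommGroup M]
    [Module R M] (f : R) :
    DirectedSystem (fun _ : ℕ => M) (fun i j h => mulPowSystem (M := M) f i j h) where
  map_self := by intro i m; simp [mulPowSystem_apply]
  map_map := by
    intro k j i hij hjk m
    simp only [mulPowSystem_apply, smul_smul, ← pow_add]
    congr 2
    omega

/-- Deligne's formula for a basic open: for the idal `e = (·f) : R ⟶ R` given by
multiplication by `f`, the colimit of the sequence
`Hom(R,M) → Hom(R,M) → ⋯` (transition maps given by precomposition with
multiplication by `f`, i.e. the system `M →(·f) M →(·f) ⋯`) is isomorphic to the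
localization `M[f⁻¹]`, i.e. `Γ(D(f), M~) ≅ colim_n Hom(J^{⊗n}, M)`. -/
theorem colimit_hom_iso_localization {R : Type u} [CommRing R] {M : Type u}
    [AddCommGroup M] [Module R M] (f : R) :
    Nonempty
      (Module.DirectLimit (R := R) (fun _ : ℕ => M) (mulPowSystem f) ≃ₗ[R]
        LocalizedModule (Submonoid.powers f) M) := by
  set L := Module.DirectLimit (R := R) (fun _ : ℕ => M) (mulPowSystem f) with hL
  set g : M →ₗ[R] L := Module.DirectLimit.of R ℕ (fun _ : ℕ => M) (mulPowSystem f) 0 with hg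
  have key : ∀ (i j : ℕ) (h : i ≤ j) (m : M),
      Module.DirectLimit.of R ℕ (fun _ : ℕ => M) (mulPowSystem f) j ((f ^ (j - i)) • m) =
      Module.DirectLimit.of R ℕ (fun _ : ℕ => M) (mulPowSystem f) i m := fun i j h m =>
    Module.DirectLimit.of_f (f := mulPowSystem f) (hij := h) (x := m)
  have hloc : IsLocalizedModule (Submonoid.powers f) g := by
    constructor
    · rintro ⟨s, n, rfl⟩
      rw [Module.End.isUnit_iff]
      constructor
      · intro x y hxy
        induction x using Module.DirectLimit.induction_on with
        | ih i a =>
        induction y using Module.DirectLimit.induction_on with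
        | ih j b =>
        simp only [Module.algebraMap_end_apply, ← map_smul] at hxy
        set k0 := max i j with hk0
        rw [← key i k0 (le_max_left i j), ← key j k0 (le_max_right i j)] at hxy ⊢
        rw [← sub_eq_zero, ← map_sub] at hxy ⊢
        set d : M := f ^ (k0 - i) • a - f ^ (k0 - j) • b with hd
        have hxy' : Module.DirectLimit.of R ℕ (fun _ : ℕ => M) (mulPowSystem f) k0
            (f ^ n • d) = 0 := by
          rw [← hxy]
          congr 1
          simp only [hd, smul_sub, smul_comm (f ^ n)]
        obtain ⟨k, hk, hk0'⟩ := Module.DirectLimit.of.zero_exact hxy'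
        rw [mulPowSystem_apply] at hk0'
        have hzero : f ^ (k + n - k0) • d = 0 := by
          have : f ^ (k - k0) • f ^ n • d = 0 := hk0'
          rw [smul_smul, ← pow_add] at this
          rw [← this]
          congr 2
          omega
        rw [← key k0 (k + n) (by omega), hzero, map_zero]
      · intro y
        induction y using Module.DirectLimit.induction_on with
        | ih i a =>
        refine ⟨Module.DirectLimit.of R ℕ (fun _ : ℕ => M) (mulPowSystem f) (i + n) a, ?_⟩
        rw [Module.algebraMap_end_apply, ← map_smul]
        have := key i (i + n) (Nat.le_add_right i n) a
        simpa using this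
    · intro y
      induction y using Module.DirectLimit.induction_on with
      | ih i a =>
      refine ⟨⟨a, ⟨f ^ i, i, rfl⟩⟩, ?_⟩
      show (f ^ i) • Module.DirectLimit.of R ℕ (fun _ : ℕ => M) (mulPowSystem f) i a = g a
      rw [← map_smul]
      simpa using key 0 i (Nat.zero_le i) a
    · intro x y hxy
      rw [← sub_eq_zero, ← map_sub] at hxy
      obtain ⟨j, hj, hj0⟩ := Module.DirectLimit.of.zero_exact hxy
      rw [mulPowSystem_apply, smul_sub, sub_eq_zero] at hj0
      exact ⟨⟨f ^ j, j, rfl⟩, by simpa [Submonoid.smul_def] using hj0⟩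
  exact ⟨(IsLocalizedModule.iso (Submonoid.powers f) g).symm⟩
end

section
/- Let C be a symmetric monoidal category with finite colimits such that ⊗ preserves finite colimits in each variable. Then the full subcategory of idals (objects of the slice category C/1 whose structure morphism e : I ⟶ 1 satisfies the idal equation) is reflective in C/1: for any morphism f : A ⟶ 1, the coequalizer π : A ⟶ I of the pair of morphisms f ⊗ id_A, id_A ⊗ f : A ⊗ A ⇉ A (composed with unitors) admits a unique morphism e : I ⟶ 1 with e ∘ π = f, this e is an idal, and π : (A, f) ⟶ (I, e) is a reflection of f into the category of idals. -/
open CategoryTheory MonoidalCategory Limits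

/-- Idals are reflective in the slice over the unit: let `C` be symmetric monoidal with
finite colimits, `⊗` preserving them in each variable.  Given `f : A ⟶ 𝟙` and a
coequalizer `π : A ⟶ I` of the pair `λ_A ∘ (f ⊗ id_A), ρ_A ∘ (id_A ⊗ f) : A ⊗ A ⇉ A`,
there is a unique `e : I ⟶ 𝟙` with `π ≫ e = f`; this `e` is an idal, and
`π : (A, f) ⟶ (I, e)` is a reflection of `f` into the category of idals: every
morphism in `C/𝟙` from `f` to an idal factors uniquely through `π`. -/
theorem idal_reflection {C : Type*} [Category C] [MonoidalCategory C] [SymmetricCategory C]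
    [HasFiniteColimits C]
    [∀ X : C, PreservesFiniteColimits (MonoidalCategory.tensorLeft X)]
    [∀ X : C, PreservesFiniteColimits (MonoidalCategory.tensorRight X)]
    {A I : C} (f : A ⟶ 𝟙_ C) (π : A ⟶ I)
    (hw : (f ▷ A) ≫ (λ_ A).hom ≫ π = (A ◁ f) ≫ (ρ_ A).hom ≫ π)
    (hc : Nonempty (IsColimit (Cofork.ofπ (f := (f ▷ A) ≫ (λ_ A).hom)
      (g := (A ◁ f) ≫ (ρ_ A).hom) π (by simpa using hw)))) :
    ∃! e : I ⟶ 𝟙_ C,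
      π ≫ e = f ∧
      (e ▷ I) ≫ (λ_ I).hom = (I ◁ e) ≫ (ρ_ I).hom ∧
      ∀ (I' : C) (e' : I' ⟶ 𝟙_ C),
        (e' ▷ I') ≫ (λ_ I').hom = (I' ◁ e') ≫ (ρ_ I').hom →
        ∀ g : A ⟶ I', g ≫ e' = f →
          ∃! h : I ⟶ I', π ≫ h = g ∧ h ≫ e' = e := by
  obtain ⟨hc⟩ := hc
  have hπepi : Epi π := by
    constructor
    intro Z u v h
    exact Cofork.IsColimit.hom_ext hc (by simpa using h)
  have hdesc : ∀ {W : C} (k : A ⟶ W), ((f ▷ A) ≫ (λ_ A).hom) ≫ k = ((A ◁ f) ≫ (ρ_ A).hom) ≫ k →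
      ∃! l : I ⟶ W, π ≫ l = k := by
    intro W k hk
    refine ⟨Cofork.IsColimit.desc hc k hk, by simpa using Cofork.IsColimit.π_desc' hc k hk, ?_⟩
    intro m hm
    apply Cofork.IsColimit.hom_ext hc
    simpa using hm.trans (by simpa using (Cofork.IsColimit.π_desc' hc k hk).symm)
  have hf : ((f ▷ A) ≫ (λ_ A).hom) ≫ f = ((A ◁ f) ≫ (ρ_ A).hom) ≫ f := by
    rw [Category.assoc, Category.assoc, ← leftUnitor_naturality, ← rightUnitor_naturality,
      ← whisker_exchange_assoc, unitors_equal]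
  obtain ⟨e, he, heuniq⟩ := hdesc f hf
  have h1 : Epi (π ▷ A) := by
    have : Epi ((tensorRight A).map π) := (tensorRight A).map_epi π
    simpa using this
  have h2 : Epi (I ◁ π) := by
    have : Epi ((tensorLeft I).map π) := (tensorLeft I).map_epi π
    simpa using this
  have hcomp : Epi ((π ▷ A) ≫ (I ◁ π)) := epi_comp _ _
  have hee : (e ▷ I) ≫ (λ_ I).hom = (I ◁ e) ≫ (ρ_ I).hom := by
    rw [← cancel_epi ((π ▷ A) ≫ (I ◁ π))]
    have l1 : (π ▷ A) ≫ (I ◁ π) ≫ (e ▷ I) ≫ (λ_ I).hom = ((f ▷ A) ≫ (λ_ A).hom) ≫ π := by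
      rw [whisker_exchange_assoc, leftUnitor_naturality, ← comp_whiskerRight_assoc, he,
        Category.assoc]
    have l2 : (π ▷ A) ≫ (I ◁ π) ≫ (I ◁ e) ≫ (ρ_ I).hom = ((A ◁ f) ≫ (ρ_ A).hom) ≫ π := by
      rw [← MonoidalCategory.whiskerLeft_comp_assoc, he, ← whisker_exchange_assoc, rightUnitor_naturality,
        Category.assoc]
    simp only [Category.assoc] at l1 l2 ⊢
    rw [l1, l2]
    simpa using hw
  refine ⟨e, ⟨he, hee, ?_⟩, ?_⟩
  · intro I' e' hI' g hg
    have hg' : ((f ▷ A) ≫ (λ_ A).hom) ≫ g = ((A ◁ f) ≫ (ρ_ A).hom) ≫ g := by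
      rw [← hg]
      simp only [comp_whiskerRight, MonoidalCategory.whiskerLeft_comp, Category.assoc]
      rw [← leftUnitor_naturality, ← rightUnitor_naturality, ← whisker_exchange_assoc,
        whisker_exchange_assoc g e', hI', whisker_exchange_assoc g g]
    obtain ⟨h, hh, hhuniq⟩ := hdesc g hg'
    have hhe : h ≫ e' = e := by
      rw [← cancel_epi π, ← Category.assoc, hh, hg, he]
    exact ⟨h, ⟨hh, hhe⟩, fun m hm => hhuniq m hm.1⟩
  · intro e₂ he₂
    exact heuniq e₂ he₂.1
end
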